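/- The subsets T1 = {2(−2+ω)x + 14y : x, y ∈ Z} and T2 = {(5+ω)x + 28y : x, y ∈ Z} of the Eisenstein integers are additive subgroups contained in the ideal I generated by 2 − ω, and the quotient groups Z[ω]/T1 and Z[ω]/T2 are isomorphic to Z/2 ⊕ Z/14 and Z/28 respectively. -/

import Mathlib

open Polynomial

/-- The Eisenstein integers `ℤ[ω]`, where `ω² + ω + 1 = 0`. -/
noncomputable abbrev Eisenstein : Type := AdjoinRoot (X ^ 2 + X + 1 : ℤ[X])

/-- The primitive cube root of unity `ω` in `ℤ[ω]`. -/
noncomputable def eisω : Eisenstein := AdjoinRoot.root _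

/-- The additive subgroup `T1 = {2(−2+ω)x + 14y : x, y ∈ ℤ}`. -/
noncomputable def T1 : AddSubgroup Eisenstein :=
  AddSubgroup.closure {2 * (-2 + eisω), 14}

/-- The additive subgroup `T2 = {(5+ω)x + 28y : x, y ∈ ℤ}`. -/
noncomputable def T2 : AddSubgroup Eisenstein :=
  AddSubgroup.closure {5 + eisω, 28}

lemma pmonic : (X ^ 2 + X + 1 : ℤ[X]).Monic := by monicity!

lemma pdeg : (X ^ 2 + X + 1 : ℤ[X]).natDegree = 2 := by compute_degree!

noncomputable def eisB : Module.Basis (Fin 2) ℤ Eisenstein :=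
  ((AdjoinRoot.powerBasis' pmonic).basis).reindex (finCongr pdeg)

lemma eisB_apply (i : Fin 2) : eisB i = eisω ^ (i : ℕ) := by
  rw [eisB, Module.Basis.reindex_apply, PowerBasis.basis_eq_pow]
  rfl

noncomputable def e' : (Fin 2 → ℤ) ≃+ Eisenstein :=
  (eisB.equivFun.symm).toAddEquiv

lemma e'_apply (v : Fin 2 → ℤ) : e' v = v 0 • (1 : Eisenstein) + v 1 • eisω := by
  show eisB.equivFun.symm v = _
  rw [Module.Basis.equivFun_symm_apply, Fin.sum_univ_two, eisB_apply, eisB_apply]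
  norm_num

lemma hω : eisω ^ 2 + eisω + 1 = 0 := by
  have h : (AdjoinRoot.mk (X ^ 2 + X + 1 : ℤ[X])) (X ^ 2 + X + 1) = 0 :=
    AdjoinRoot.mk_self
  simpa [eisω, map_add, map_pow, AdjoinRoot.mk_X] using h

lemma e'_g1 : e' ![-4, 2] = 2 * (-2 + eisω) := by
  rw [e'_apply]
  simp [zsmul_eq_mul]
  ring

lemma e'_g2 : e' ![14, 0] = (14 : Eisenstein) := by
  rw [e'_apply]
  simp [zsmul_eq_mul]

lemma e'_g3 : e' ![5, 1] = 5 + eisω := by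
  rw [e'_apply]
  simp [zsmul_eq_mul]

lemma e'_g4 : e' ![28, 0] = (28 : Eisenstein) := by
  rw [e'_apply]
  simp [zsmul_eq_mul]

def L1 : AddSubgroup (Fin 2 → ℤ) := AddSubgroup.closure {![-4, 2], ![14, 0]}

def L2 : AddSubgroup (Fin 2 → ℤ) := AddSubgroup.closure {![5, 1], ![28, 0]}

lemma map_L1 : L1.map (e' : (Fin 2 → ℤ) →+ Eisenstein) = T1 := by
  rw [L1, T1, AddMonoidHom.map_closure, Set.image_insert_eq, Set.image_singleton]
  simp only [AddMonoidHom.coe_coe, e'_g1, e'_g2]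

lemma map_L2 : L2.map (e' : (Fin 2 → ℤ) →+ Eisenstein) = T2 := by
  rw [L2, T2, AddMonoidHom.map_closure, Set.image_insert_eq, Set.image_singleton]
  simp only [AddMonoidHom.coe_coe, e'_g3, e'_g4]

def ψ1 : (Fin 2 → ℤ) →+ ZMod 2 × ZMod 14 where
  toFun v := (((v 1 : ℤ) : ZMod 2), ((v 0 + 2 * v 1 : ℤ) : ZMod 14))
  map_zero' := by simp
  map_add' v w := by
    simp only [Pi.add_apply, Prod.mk_add_mk, Prod.mk.injEq]
    constructor <;> push_cast <;> ring

def ψ2 : (Fin 2 → ℤ) →+ ZMod 28 where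
  toFun v := ((v 0 - 5 * v 1 : ℤ) : ZMod 28)
  map_zero' := by simp
  map_add' v w := by
    simp only [Pi.add_apply]
    push_cast
    ring

lemma ker_ψ1 : L1 = ψ1.ker := by
  apply le_antisymm
  · rw [L1]
    refine (AddSubgroup.closure_le _).mpr ?_
    rintro x hx
    simp only [Set.mem_insert_iff, Set.mem_singleton_iff] at hx
    rcases hx with rfl | rfl <;>
      · rw [SetLike.mem_coe, AddMonoidHom.mem_ker]
        show (_, _) = (0, 0)
        decide
  · intro v hv
    rw [AddMonoidHom.mem_ker] at hv
    have h1 : ((v 1 : ℤ) : ZMod 2) = 0 := congrArg Prod.fst hv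
    have h2 : ((v 0 + 2 * v 1 : ℤ) : ZMod 14) = 0 := congrArg Prod.snd hv
    rw [ZMod.intCast_zmod_eq_zero_iff_dvd] at h1 h2
    obtain ⟨k, hk⟩ := h1
    obtain ⟨m, hm⟩ := h2
    rw [L1, AddSubgroup.mem_closure_pair]
    refine ⟨k, m, ?_⟩
    funext i
    fin_cases i <;> simp <;> omega

lemma ker_ψ2 : L2 = ψ2.ker := by
  apply le_antisymm
  · rw [L2]
    refine (AddSubgroup.closure_le _).mpr ?_
    rintro x hx
    simp only [Set.mem_insert_iff, Set.mem_singleton_iff] at hx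
    rcases hx with rfl | rfl <;>
      · rw [SetLike.mem_coe, AddMonoidHom.mem_ker]
        show ((_ : ℤ) : ZMod 28) = 0
        decide
  · intro v hv
    rw [AddMonoidHom.mem_ker] at hv
    have h2 : ((v 0 - 5 * v 1 : ℤ) : ZMod 28) = 0 := hv
    rw [ZMod.intCast_zmod_eq_zero_iff_dvd] at h2
    obtain ⟨m, hm⟩ := h2
    rw [L2, AddSubgroup.mem_closure_pair]
    refine ⟨v 1, m, ?_⟩
    funext i
    fin_cases i <;> simp <;> omega

lemma surj_ψ1 : Function.Surjective ψ1 := by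
  rintro ⟨u, w⟩
  obtain ⟨a, ha⟩ := ZMod.intCast_surjective (n := 2) u
  obtain ⟨b, hb⟩ := ZMod.intCast_surjective (n := 14) w
  refine ⟨![b - 2 * a, a], ?_⟩
  show (_, _) = (_, _)
  simp only [Matrix.cons_val_zero, Matrix.cons_val_one, Matrix.head_cons]
  rw [Prod.mk.injEq]
  constructor
  · exact ha
  · rw [← hb]; congr 1; ring

lemma surj_ψ2 : Function.Surjective ψ2 := by
  intro u
  obtain ⟨b, hb⟩ := ZMod.intCast_surjective (n := 28) u
  refine ⟨![b, 0], ?_⟩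
  show ((_ : ℤ) : ZMod 28) = u
  simp only [Matrix.cons_val_zero, Matrix.cons_val_one, Matrix.head_cons]
  rw [← hb]; congr 1; ring

theorem stmt13 :
    -- `T1` and `T2` consist exactly of the stated integer combinations
    ((T1 : Set Eisenstein) =
      {z | ∃ x y : ℤ, z = x • (2 * (-2 + eisω)) + y • (14 : Eisenstein)}) ∧
    ((T2 : Set Eisenstein) =
      {z | ∃ x y : ℤ, z = x • (5 + eisω) + y • (28 : Eisenstein)}) ∧
    -- both are contained in the ideal generated by `2 − ω`
    (T1 : Set Eisenstein) ⊆ (Ideal.span {2 - eisω} : Ideal Eisenstein) ∧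
    (T2 : Set Eisenstein) ⊆ (Ideal.span {2 - eisω} : Ideal Eisenstein) ∧
    -- the quotients are `ℤ/2 ⊕ ℤ/14` and `ℤ/28`
    Nonempty (Eisenstein ⧸ T1 ≃+ ZMod 2 × ZMod 14) ∧
    Nonempty (Eisenstein ⧸ T2 ≃+ ZMod 28) := by
  refine ⟨?_, ?_, ?_, ?_, ?_, ?_⟩
  · ext z
    simp only [SetLike.mem_coe, T1, AddSubgroup.mem_closure_pair, Set.mem_setOf_eq]
    exact ⟨fun ⟨m, n, h⟩ => ⟨m, n, h.symm⟩, fun ⟨m, n, h⟩ => ⟨m, n, h.symm⟩⟩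
  · ext z
    simp only [SetLike.mem_coe, T2, AddSubgroup.mem_closure_pair, Set.mem_setOf_eq]
    exact ⟨fun ⟨m, n, h⟩ => ⟨m, n, h.symm⟩, fun ⟨m, n, h⟩ => ⟨m, n, h.symm⟩⟩
  · have h1 : T1 ≤ (Ideal.span {2 - eisω} : Ideal Eisenstein).toAddSubgroup := by
      rw [T1]
      refine (AddSubgroup.closure_le _).mpr ?_
      rintro x hx
      simp only [Set.mem_insert_iff, Set.mem_singleton_iff] at hx
      rcases hx with rfl | rfl
      · exact Ideal.mem_span_singleton'.mpr ⟨-2, by ring⟩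
      · exact Ideal.mem_span_singleton'.mpr ⟨6 + 2 * eisω, by linear_combination (-2 : Eisenstein) * hω⟩
    exact fun z hz => h1 hz
  · have h2 : T2 ≤ (Ideal.span {2 - eisω} : Ideal Eisenstein).toAddSubgroup := by
      rw [T2]
      refine (AddSubgroup.closure_le _).mpr ?_
      rintro x hx
      simp only [Set.mem_insert_iff, Set.mem_singleton_iff] at hx
      rcases hx with rfl | rfl
      · exact Ideal.mem_span_singleton'.mpr ⟨2 + eisω, by linear_combination (-1 : Eisenstein) * hω⟩
      · exact Ideal.mem_span_singleton'.mpr ⟨12 + 4 * eisω, by linear_combination (-4 : Eisenstein) * hω⟩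
    exact fun z hz => h2 hz
  · exact ⟨((QuotientAddGroup.congr L1 T1 e' map_L1).symm.trans
      (QuotientAddGroup.quotientAddEquivOfEq ker_ψ1)).trans
      (QuotientAddGroup.quotientKerEquivOfSurjective ψ1 surj_ψ1)⟩
  · exact ⟨((QuotientAddGroup.congr L2 T2 e' map_L2).symm.trans
      (QuotientAddGroup.quotientAddEquivOfEq ker_ψ2)).trans
      (QuotientAddGroup.quotientKerEquivOfSurjective ψ2 surj_ψ2)⟩
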